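/- Let 𝒜 ⊂ L(H) be a unital separable C*-algebra of bounded operators on a complex separable Hilbert space H. If 𝒜 has a Følner sequence {P_n}_{n∈ℕ}, then 𝒜 has an amenable trace. Moreover, any weak-* cluster point of the sequence of states ψ_n(X) := Tr(X P_n)/Tr(P_n) on L(H) is a hypertrace for 𝒜, and its restriction to 𝒜 is an amenable trace. -/

import Mathlib

open Filter Topology
open scoped ComplexOrder

noncomputable section

variable {H : Type*} [NormedAddCommGroup H] [InnerProductSpace ℂ H] [CompleteSpace H]

/-- `P` is a finite-rank orthogonal projection on the Hilbert space `H`. -/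
def IsFinRankProj (P : H →L[ℂ] H) : Prop :=
  IsIdempotentElem P ∧ IsSelfAdjoint P ∧ FiniteDimensional ℂ (LinearMap.range (P : H →ₗ[ℂ] H))

/-- The Hilbert–Schmidt norm of an operator, computed with respect to the Hilbert basis `b`
(for Hilbert–Schmidt operators it is independent of the choice of `b`). -/
def hsNorm {ι : Type*} (b : HilbertBasis ι ℂ H) (T : H →L[ℂ] H) : ℝ :=
  Real.sqrt (∑' i, ‖T (b i)‖ ^ 2)

/-- The canonical trace of an operator, computed with respect to the Hilbert basis `b`
(for trace-class operators it is independent of the choice of `b`). -/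
def trOp {ι : Type*} (b : HilbertBasis ι ℂ H) (T : H →L[ℂ] H) : ℂ :=
  ∑' i, (inner ℂ (b i) (T (b i)) : ℂ)

/-- `{P n}` is a Følner sequence (of non-zero finite-rank orthogonal projections)
for the set of operators `S ⊆ L(H)`. -/
def IsFolnerSeq {ι : Type*} (b : HilbertBasis ι ℂ H) (S : Set (H →L[ℂ] H))
    (P : ℕ → H →L[ℂ] H) : Prop :=
  (∀ n, IsFinRankProj (P n) ∧ P n ≠ 0) ∧
  ∀ A ∈ S, Tendsto (fun n => hsNorm b (A * P n - P n * A) / hsNorm b (P n)) atTop (𝓝 0)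

/-- A proper Følner sequence: an increasing Følner sequence converging strongly to `1`. -/
def IsProperFolnerSeq {ι : Type*} (b : HilbertBasis ι ℂ H) (S : Set (H →L[ℂ] H))
    (P : ℕ → H →L[ℂ] H) : Prop :=
  IsFolnerSeq b S P ∧ Monotone (fun n => LinearMap.range (P n : H →ₗ[ℂ] H)) ∧
    ∀ x : H, Tendsto (fun n => P n x) atTop (𝓝 x)

/-- A state on a unital complex `*`-algebra: a unital positive linear functional. -/
def IsStateOn {A : Type*} [Ring A] [Algebra ℂ A] [StarRing A] (φ : A →ₗ[ℂ] ℂ) : Prop :=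
  φ 1 = 1 ∧ ∀ a, 0 ≤ φ (star a * a)

/-- `ψ` is a hypertrace on `L(H)` for the set `S`: a state on `L(H)` centralized by `S`. -/
def IsHypertrace (ψ : (H →L[ℂ] H) →ₗ[ℂ] ℂ) (S : Set (H →L[ℂ] H)) : Prop :=
  IsStateOn ψ ∧ ∀ X : H →L[ℂ] H, ∀ A ∈ S, ψ (X * A) = ψ (A * X)

/-- The inclusion of a star subalgebra as a linear map. -/
def valLM (𝒜 : StarSubalgebra ℂ (H →L[ℂ] H)) : ↥𝒜 →ₗ[ℂ] (H →L[ℂ] H) :=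
  { toFun := Subtype.val, map_add' := fun _ _ => rfl, map_smul' := fun _ _ => rfl }

/-- `τ` is an amenable trace on the concrete C*-algebra `𝒜 ⊆ L(H)`: a state on `𝒜` which
extends to a state `ψ` on `L(H)` satisfying `ψ(XA) = ψ(AX)` for `X ∈ L(H)`, `A ∈ 𝒜`. -/
def IsAmenableTrace (𝒜 : StarSubalgebra ℂ (H →L[ℂ] H)) (τ : ↥𝒜 →ₗ[ℂ] ℂ) : Prop :=
  IsStateOn τ ∧ ∃ ψ : (H →L[ℂ] H) →ₗ[ℂ] ℂ,
    IsHypertrace ψ ↑𝒜 ∧ ∀ a : ↥𝒜, ψ (valLM 𝒜 a) = τ a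

/- ############ Auxiliary machinery ############ -/

namespace AmenableAux

open ContinuousLinearMap

variable {H : Type*} [NormedAddCommGroup H] [InnerProductSpace ℂ H] [CompleteSpace H]
variable {ι : Type*}

local notation "⟪" x ", " y "⟫" => @inner ℂ _ _ x y

/-- A finite-rank representation of an operator. -/
def HasFR (T : H →L[ℂ] H) : Prop :=
  ∃ (κ : Type) (_ : Fintype κ) (u v : κ → H), ∀ x, T x = ∑ k, ⟪v k, x⟫ • u k

section FRdata

variable {κ : Type} [Fintype κ] {T : H →L[ℂ] H}

lemma fr_term_eq (b : HilbertBasis ι ℂ H) (u v : κ → H)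
    (h : ∀ x, T x = ∑ k, ⟪v k, x⟫ • u k) :
    (fun i => ⟪b i, T (b i)⟫) = fun i => ∑ k, ⟪v k, b i⟫ * ⟪b i, u k⟫ := by
  funext i
  rw [h, inner_sum]
  exact Finset.sum_congr rfl fun k _ => by rw [inner_smul_right]

lemma fr_summable_inner (b : HilbertBasis ι ℂ H) (u v : κ → H)
    (h : ∀ x, T x = ∑ k, ⟪v k, x⟫ • u k) :
    Summable (fun i => ⟪b i, T (b i)⟫) := by
  rw [fr_term_eq b u v h]
  exact summable_sum fun k _ => b.summable_inner_mul_inner (v k) (u k)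

lemma fr_trOp (b : HilbertBasis ι ℂ H) (u v : κ → H)
    (h : ∀ x, T x = ∑ k, ⟪v k, x⟫ • u k) :
    trOp b T = ∑ k, ⟪v k, u k⟫ := by
  unfold trOp
  rw [fr_term_eq b u v h, Summable.tsum_finsetSum fun k _ => b.summable_inner_mul_inner (v k) (u k)]
  exact Finset.sum_congr rfl fun k _ => b.tsum_inner_mul_inner (v k) (u k)

lemma summable_sq_inner (b : HilbertBasis ι ℂ H) (x : H) :
    Summable fun i => ‖⟪b i, x⟫‖ ^ 2 :=
  Orthonormal.inner_products_summable x b.orthonormal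

lemma summable_sq_inner' (b : HilbertBasis ι ℂ H) (x : H) :
    Summable fun i => ‖⟪x, b i⟫‖ ^ 2 :=
  (summable_sq_inner b x).congr fun i => by rw [norm_inner_symm]

set_option maxHeartbeats 1000000 in
lemma fr_hs_summable (b : HilbertBasis ι ℂ H) (u v : κ → H)
    (h : ∀ x, T x = ∑ k, ⟪v k, x⟫ • u k) :
    Summable fun i => ‖T (b i)‖ ^ 2 := by
  have key : ∀ i, ‖T (b i)‖ ^ 2 ≤
      (Fintype.card κ : ℝ) * ∑ k, ‖u k‖ ^ 2 * ‖⟪v k, b i⟫‖ ^ 2 := by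
    intro i
    have h1 : ‖T (b i)‖ ≤ ∑ k, ‖⟪v k, b i⟫‖ * ‖u k‖ := by
      rw [h]
      refine (norm_sum_le _ _).trans (le_of_eq ?_)
      exact Finset.sum_congr rfl fun k _ => by rw [norm_smul]
    have h2 : ‖T (b i)‖ ^ 2 ≤ (∑ k, ‖⟪v k, b i⟫‖ * ‖u k‖) ^ 2 :=
      pow_le_pow_left₀ (norm_nonneg _) h1 2
    refine h2.trans ?_
    have h3 : (∑ k, ‖⟪v k, b i⟫‖ * ‖u k‖) ^ 2 ≤
        ((Finset.univ : Finset κ).card : ℝ) * ∑ k, (‖⟪v k, b i⟫‖ * ‖u k‖) ^ 2 :=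
      sq_sum_le_card_mul_sum_sq
    refine h3.trans (le_of_eq ?_)
    rw [Finset.card_univ]
    congr 1
    exact Finset.sum_congr rfl fun k _ => by ring
  refine Summable.of_nonneg_of_le (fun i => sq_nonneg _) key ?_
  refine Summable.mul_left _ (summable_sum fun k _ => ?_)
  exact (summable_sq_inner' b (v k)).mul_left (‖u k‖ ^ 2)

lemma fr_comp_left (S : H →L[ℂ] H) (u v : κ → H)
    (h : ∀ x, T x = ∑ k, ⟪v k, x⟫ • u k) :
    ∀ x, (S * T) x = ∑ k, ⟪v k, x⟫ • (S (u k)) := fun x => by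
  rw [mul_apply_eq_comp, h, map_sum]
  exact Finset.sum_congr rfl fun k _ => by rw [map_smul]

lemma fr_comp_right (S : H →L[ℂ] H) (u v : κ → H)
    (h : ∀ x, T x = ∑ k, ⟪v k, x⟫ • u k) :
    ∀ x, (T * S) x = ∑ k, ⟪adjoint S (v k), x⟫ • u k := fun x => by
  rw [mul_apply_eq_comp, h]
  exact Finset.sum_congr rfl fun k _ => by rw [adjoint_inner_left]

end FRdata

lemma HasFR.mul_left {T : H →L[ℂ] H} (hT : HasFR T) (S : H →L[ℂ] H) :
    HasFR (S * T) := by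
  obtain ⟨κ, _, u, v, h⟩ := hT
  exact ⟨κ, ‹_›, fun k => S (u k), v, fr_comp_left S u v h⟩

lemma HasFR.mul_right {T : H →L[ℂ] H} (hT : HasFR T) (S : H →L[ℂ] H) :
    HasFR (T * S) := by
  obtain ⟨κ, _, u, v, h⟩ := hT
  exact ⟨κ, ‹_›, u, fun k => ContinuousLinearMap.adjoint S (v k), fr_comp_right S u v h⟩

lemma HasFR.sub {T₁ T₂ : H →L[ℂ] H} (h₁ : HasFR T₁) (h₂ : HasFR T₂) :
    HasFR (T₁ - T₂) := by
  obtain ⟨κ₁, i₁, u₁, v₁, hr₁⟩ := h₁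
  obtain ⟨κ₂, i₂, u₂, v₂, hr₂⟩ := h₂
  refine ⟨κ₁ ⊕ κ₂, inferInstance, Sum.elim u₁ (fun k => -u₂ k), Sum.elim v₁ v₂, fun x => ?_⟩
  rw [ContinuousLinearMap.sub_apply, hr₁ x, hr₂ x, Fintype.sum_sum_type]
  simp only [Sum.elim_inl, Sum.elim_inr, smul_neg]
  rw [Finset.sum_neg_distrib, ← sub_eq_add_neg]

lemma HasFR.summable_inner {T : H →L[ℂ] H} (hT : HasFR T) (b : HilbertBasis ι ℂ H) :
    Summable (fun i => ⟪b i, T (b i)⟫) := by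
  obtain ⟨κ, _, u, v, h⟩ := hT
  exact fr_summable_inner b u v h

lemma HasFR.hs_summable {T : H →L[ℂ] H} (hT : HasFR T) (b : HilbertBasis ι ℂ H) :
    Summable fun i => ‖T (b i)‖ ^ 2 := by
  obtain ⟨κ, _, u, v, h⟩ := hT
  exact fr_hs_summable b u v h

lemma HasFR.trace_comm {T : H →L[ℂ] H} (hT : HasFR T) (b : HilbertBasis ι ℂ H)
    (S : H →L[ℂ] H) : trOp b (S * T) = trOp b (T * S) := by
  obtain ⟨κ, _, u, v, h⟩ := hT
  rw [fr_trOp b _ v (fr_comp_left S u v h), fr_trOp b u _ (fr_comp_right S u v h)]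
  exact Finset.sum_congr rfl fun k _ =>
    (ContinuousLinearMap.adjoint_inner_left S (u k) (v k)).symm

lemma hasFR_of_finiteDimensional (T : H →L[ℂ] H)
    (hfin : FiniteDimensional ℂ (LinearMap.range (T : H →ₗ[ℂ] H))) : HasFR T := by
  haveI := hfin
  set F : Submodule ℂ H := LinearMap.range (T : H →ₗ[ℂ] H) with hF
  let o := stdOrthonormalBasis ℂ F
  refine ⟨Fin (Module.finrank ℂ F), inferInstance, fun k => (o k : H),
    fun k => ContinuousLinearMap.adjoint T (o k : H), fun x => ?_⟩
  have hmem : T x ∈ F := LinearMap.mem_range_self _ x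
  have h1 := o.sum_repr (⟨T x, hmem⟩ : F)
  have h2 := congrArg (Subtype.val : F → H) h1
  simp only [Submodule.coe_sum, SetLike.val_smul] at h2
  calc T x = ∑ k, o.repr (⟨T x, hmem⟩ : F) k • ((o k : F) : H) := h2.symm
    _ = ∑ k, ⟪ContinuousLinearMap.adjoint T ((o k : F) : H), x⟫ • ((o k : F) : H) := by
        refine Finset.sum_congr rfl fun k _ => ?_
        congr 1
        rw [o.repr_apply_apply]
        rw [Submodule.coe_inner]
        exact (ContinuousLinearMap.adjoint_inner_left T x _).symm

/-- ℓ² Cauchy-Schwarz for tsums. -/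
lemma tsum_mul_le_sqrt {ι : Type*} (a c : ι → ℝ) (ha : ∀ i, 0 ≤ a i) (hc : ∀ i, 0 ≤ c i)
    (hsa : Summable fun i => a i ^ 2) (hsc : Summable fun i => c i ^ 2) :
    Summable (fun i => a i * c i) ∧
      ∑' i, a i * c i ≤ Real.sqrt (∑' i, a i ^ 2) * Real.sqrt (∑' i, c i ^ 2) := by
  have hs : Summable (fun i => a i * c i) := by
    refine Summable.of_nonneg_of_le (fun i => mul_nonneg (ha i) (hc i))
      (fun i => ?_) ((hsa.add hsc).div_const 2)
    have := two_mul_le_add_sq (a i) (c i)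
    linarith
  refine ⟨hs, Summable.tsum_le_of_sum_le hs fun s => ?_⟩
  have h1 : (∑ i ∈ s, a i * c i) ^ 2 ≤ (∑ i ∈ s, a i ^ 2) * ∑ i ∈ s, c i ^ 2 :=
    s.sum_mul_sq_le_sq_mul_sq a c
  have h2 : ∑ i ∈ s, a i ^ 2 ≤ ∑' i, a i ^ 2 :=
    Summable.sum_le_tsum s (fun i _ => sq_nonneg _) hsa
  have h3 : ∑ i ∈ s, c i ^ 2 ≤ ∑' i, c i ^ 2 :=
    Summable.sum_le_tsum s (fun i _ => sq_nonneg _) hsc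
  have h4 : (0 : ℝ) ≤ ∑ i ∈ s, a i * c i :=
    Finset.sum_nonneg fun i _ => mul_nonneg (ha i) (hc i)
  rw [← Real.sqrt_mul (tsum_nonneg fun i => sq_nonneg _),
    Real.le_sqrt h4 (mul_nonneg (tsum_nonneg fun i => sq_nonneg _)
      (tsum_nonneg fun i => sq_nonneg _))]
  exact h1.trans (mul_le_mul h2 h3 (Finset.sum_nonneg fun i _ => sq_nonneg _)
    (tsum_nonneg fun i => sq_nonneg _))

lemma inner_tsum_cs (b : HilbertBasis ι ℂ H) {S R : H →L[ℂ] H}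
    (hS : Summable fun i => ‖S (b i)‖ ^ 2) (hR : Summable fun i => ‖R (b i)‖ ^ 2) :
    Summable (fun i => ⟪S (b i), R (b i)⟫) ∧
      ‖∑' i, ⟪S (b i), R (b i)⟫‖ ≤ hsNorm b S * hsNorm b R := by
  obtain ⟨hs, hle⟩ := tsum_mul_le_sqrt (fun i => ‖S (b i)‖) (fun i => ‖R (b i)‖)
    (fun i => norm_nonneg _) (fun i => norm_nonneg _) hS hR
  have hnorm : ∀ i, ‖⟪S (b i), R (b i)⟫‖ ≤ ‖S (b i)‖ * ‖R (b i)‖ :=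
    fun i => norm_inner_le_norm _ _
  have hsum2 : Summable fun i => ‖⟪S (b i), R (b i)⟫‖ :=
    Summable.of_nonneg_of_le (fun i => norm_nonneg _) hnorm hs
  refine ⟨Summable.of_norm hsum2, ?_⟩
  calc ‖∑' i, ⟪S (b i), R (b i)⟫‖ ≤ ∑' i, ‖⟪S (b i), R (b i)⟫‖ :=
        norm_tsum_le_tsum_norm hsum2
    _ ≤ ∑' i, ‖S (b i)‖ * ‖R (b i)‖ := Summable.tsum_le_tsum hnorm hsum2 hs
    _ ≤ hsNorm b S * hsNorm b R := hle

lemma hsNorm_nonneg (b : HilbertBasis ι ℂ H) (T : H →L[ℂ] H) : 0 ≤ hsNorm b T :=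
  Real.sqrt_nonneg _

lemma hs_summable_mul_left (b : HilbertBasis ι ℂ H) (X : H →L[ℂ] H) {T : H →L[ℂ] H}
    (hT : Summable fun i => ‖T (b i)‖ ^ 2) :
    Summable fun i => ‖(X * T) (b i)‖ ^ 2 := by
  refine Summable.of_nonneg_of_le (fun i => sq_nonneg _) (fun i => ?_) (hT.mul_left (‖X‖ ^ 2))
  rw [mul_apply_eq_comp]
  calc ‖X (T (b i))‖ ^ 2 ≤ (‖X‖ * ‖T (b i)‖) ^ 2 :=
        pow_le_pow_left₀ (norm_nonneg _) (X.le_opNorm _) 2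
    _ = ‖X‖ ^ 2 * ‖T (b i)‖ ^ 2 := by ring

lemma hsNorm_mul_left_le (b : HilbertBasis ι ℂ H) (X : H →L[ℂ] H) {T : H →L[ℂ] H}
    (hT : Summable fun i => ‖T (b i)‖ ^ 2) :
    hsNorm b (X * T) ≤ ‖X‖ * hsNorm b T := by
  unfold hsNorm
  have h1 : ∑' i, ‖(X * T) (b i)‖ ^ 2 ≤ ∑' i, ‖X‖ ^ 2 * ‖T (b i)‖ ^ 2 := by
    refine Summable.tsum_le_tsum (fun i => ?_) (hs_summable_mul_left b X hT) (hT.mul_left _)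
    rw [mul_apply_eq_comp]
    calc ‖X (T (b i))‖ ^ 2 ≤ (‖X‖ * ‖T (b i)‖) ^ 2 :=
          pow_le_pow_left₀ (norm_nonneg _) (X.le_opNorm _) 2
      _ = ‖X‖ ^ 2 * ‖T (b i)‖ ^ 2 := by ring
  rw [tsum_mul_left] at h1
  calc Real.sqrt (∑' i, ‖(X * T) (b i)‖ ^ 2) ≤ Real.sqrt (‖X‖ ^ 2 * ∑' i, ‖T (b i)‖ ^ 2) :=
        Real.sqrt_le_sqrt h1
    _ = ‖X‖ * Real.sqrt (∑' i, ‖T (b i)‖ ^ 2) := by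
        rw [Real.sqrt_mul (sq_nonneg _), Real.sqrt_sq (norm_nonneg _)]

lemma proj_inner_move {P : H →L[ℂ] H} (hadj : ContinuousLinearMap.adjoint P = P)
    (x y : H) : ⟪x, P y⟫ = ⟪P x, y⟫ := by
  rw [← ContinuousLinearMap.adjoint_inner_right P x y, hadj]

lemma trOp_mul_proj (b : HilbertBasis ι ℂ H) {P : H →L[ℂ] H} (hp2 : P * P = P)
    (hadj : ContinuousLinearMap.adjoint P = P) (hFRP : HasFR P) (M : H →L[ℂ] H) :
    trOp b (M * P) = ∑' i, ⟪P (b i), (M * P) (b i)⟫ := by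
  have h1 : M * P = M * P * P := by rw [mul_assoc, hp2]
  rw [show trOp b (M * P) = trOp b (P * (M * P)) from by
    nth_rewrite 1 [h1]; exact hFRP.trace_comm b (M * P)]
  unfold trOp
  exact tsum_congr fun i => by rw [mul_apply_eq_comp, proj_inner_move hadj]

lemma trOp_proj_eq (b : HilbertBasis ι ℂ H) {P : H →L[ℂ] H} (hp2 : P * P = P)
    (hadj : ContinuousLinearMap.adjoint P = P) (hFRP : HasFR P) :
    trOp b P = ((∑' i, ‖P (b i)‖ ^ 2 : ℝ) : ℂ) := by
  have h0 : trOp b P = ∑' i, ⟪P (b i), (1 * P) (b i)⟫ := by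
    rw [← one_mul P]; exact trOp_mul_proj b hp2 hadj hFRP 1
  rw [h0]
  have h1 : ∀ i, ⟪P (b i), ((1 : H →L[ℂ] H) * P) (b i)⟫ = ((‖P (b i)‖ ^ 2 : ℝ) : ℂ) := by
    intro i
    rw [one_mul, inner_self_eq_norm_sq_to_K]
    norm_cast
  rw [tsum_congr h1, ← Complex.ofReal_tsum]

lemma proj_sq_tsum_pos (b : HilbertBasis ι ℂ H) {P : H →L[ℂ] H} (hne : P ≠ 0)
    (hsum : Summable fun i => ‖P (b i)‖ ^ 2) :
    0 < ∑' i, ‖P (b i)‖ ^ 2 := by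
  rcases (tsum_nonneg fun i => sq_nonneg ‖P (b i)‖ :
      (0 : ℝ) ≤ ∑' i, ‖P (b i)‖ ^ 2).lt_or_eq with h | h
  · exact h
  · exfalso
    apply hne
    have hzero : ∀ i, P (b i) = 0 := by
      intro i
      have h1 : ‖P (b i)‖ ^ 2 ≤ 0 := by
        rw [h]
        exact Summable.le_tsum hsum i fun j _ => sq_nonneg _
      have h2 := sq_nonneg ‖P (b i)‖
      have h3 : ‖P (b i)‖ ^ 2 = 0 := le_antisymm h1 h2
      have h4 : ‖P (b i)‖ = 0 := by
        nlinarith [norm_nonneg (P (b i))]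
      exact norm_eq_zero.mp h4
    have hd : Dense (↑(Submodule.span ℂ (Set.range b)) : Set H) :=
      Submodule.dense_iff_topologicalClosure_eq_top.mpr b.dense_span
    have heq : Set.EqOn (⇑P) (⇑(0 : H →L[ℂ] H)) ↑(Submodule.span ℂ (Set.range b)) := by
      intro x hx
      induction hx using Submodule.span_induction with
      | mem x hx => obtain ⟨i, rfl⟩ := hx; simpa using hzero i
      | zero => simp
      | add x y _ _ hx hy => simp [map_add, hx, hy]
      | smul c x _ hx => simp [map_smul, hx]
    have hfun : ⇑P = ⇑(0 : H →L[ℂ] H) :=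
      Continuous.ext_on hd P.continuous (map_continuous 0) heq
    ext x
    exact congrFun hfun x

/-- The key trace commutator estimate. -/
lemma main_est (b : HilbertBasis ι ℂ H) {P A : H →L[ℂ] H} (hp2 : P * P = P)
    (hadj : ContinuousLinearMap.adjoint P = P) (hFRP : HasFR P) (X : H →L[ℂ] H) :
    ‖trOp b (X * A * P) - trOp b (A * X * P)‖ ≤
      ‖X‖ * (hsNorm b (A * P - P * A) +
        hsNorm b (ContinuousLinearMap.adjoint A * P - P * ContinuousLinearMap.adjoint A)) *
        hsNorm b P := by
  set A' := ContinuousLinearMap.adjoint A with hA'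
  set T := A * P - P * A with hT
  set T' := A' * P - P * A' with hT'
  have hstarP : star P = P := by rw [star_eq_adjoint]; exact hadj
  have hFRT : HasFR T := (hFRP.mul_left A).sub (hFRP.mul_right A)
  have hFRT' : HasFR T' := (hFRP.mul_left A').sub (hFRP.mul_right A')
  have hTadj : ContinuousLinearMap.adjoint T = -T' := by
    have h1 : star T = -T' := by
      rw [hT, hT', star_sub, star_mul, star_mul, hstarP, star_eq_adjoint, ← hA', neg_sub]
    rw [← star_eq_adjoint, h1]
  have hcyc : trOp b (A * X * P) = trOp b (X * P * A) := by
    rw [mul_assoc A X P]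
    exact (hFRP.mul_left X).trace_comm b A
  have halg : X * A * P - X * P * A = X * T * P + X * P * T := by
    have h0 : X * T * P + X * P * T = X * A * (P * P) - X * (P * P) * A := by
      rw [hT]; noncomm_ring
    rw [h0, hp2]
  have hs1 : Summable fun i => ⟪b i, (X * A * P) (b i)⟫ :=
    (hFRP.mul_left (X * A)).summable_inner b
  have hs2 : Summable fun i => ⟪b i, (X * P * A) (b i)⟫ :=
    ((hFRP.mul_left X).mul_right A).summable_inner b
  have hFR3 : HasFR (X * T * P) := hFRP.mul_left (X * T)
  have hFR4 : HasFR (X * P * T) := hFRT.mul_left (X * P)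
  have hs3 : Summable fun i => ⟪b i, (X * T * P) (b i)⟫ := hFR3.summable_inner b
  have hs4 : Summable fun i => ⟪b i, (X * P * T) (b i)⟫ := hFR4.summable_inner b
  have hsub : trOp b (X * A * P) - trOp b (X * P * A) =
      trOp b (X * T * P) + trOp b (X * P * T) := by
    have e1 : trOp b (X * A * P) - trOp b (X * P * A) = trOp b (X * A * P - X * P * A) := by
      unfold trOp
      rw [← Summable.tsum_sub hs1 hs2]
      exact tsum_congr fun i => by
        rw [ContinuousLinearMap.sub_apply, inner_sub_right]
    have e2 : trOp b (X * T * P + X * P * T) = trOp b (X * T * P) + trOp b (X * P * T) := by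
      unfold trOp
      rw [← Summable.tsum_add hs3 hs4]
      exact tsum_congr fun i => by
        rw [ContinuousLinearMap.add_apply, inner_add_right]
    rw [e1, halg, e2]
  have hb1 : ‖trOp b (X * T * P)‖ ≤ hsNorm b P * (‖X‖ * hsNorm b T) := by
    rw [show trOp b (X * T * P) = trOp b (P * (X * T)) from hFRP.trace_comm b (X * T)]
    have he : trOp b (P * (X * T)) = ∑' i, ⟪P (b i), (X * T) (b i)⟫ := by
      unfold trOp
      exact tsum_congr fun i => by rw [mul_apply_eq_comp, proj_inner_move hadj]
    obtain ⟨hsum, hle⟩ := inner_tsum_cs b (hFRP.hs_summable b)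
      (hs_summable_mul_left b X (hFRT.hs_summable b))
    rw [he]
    refine hle.trans ?_
    exact mul_le_mul_of_nonneg_left (hsNorm_mul_left_le b X (hFRT.hs_summable b))
      (hsNorm_nonneg b P)
  have hb2 : ‖trOp b (X * P * T)‖ ≤ hsNorm b T' * (‖X‖ * hsNorm b P) := by
    rw [show trOp b (X * P * T) = trOp b (T * (X * P)) from hFRT.trace_comm b (X * P)]
    have he : trOp b (T * (X * P)) =
        ∑' i, ⟪ContinuousLinearMap.adjoint T (b i), (X * P) (b i)⟫ := by
      unfold trOp
      exact tsum_congr fun i => by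
        rw [mul_apply_eq_comp, ← ContinuousLinearMap.adjoint_inner_left]
    have hadjnorm : ∀ i, ‖ContinuousLinearMap.adjoint T (b i)‖ ^ 2 = ‖T' (b i)‖ ^ 2 := by
      intro i; rw [hTadj, ContinuousLinearMap.neg_apply, norm_neg]
    have hadjsum : Summable fun i => ‖ContinuousLinearMap.adjoint T (b i)‖ ^ 2 :=
      (hFRT'.hs_summable b).congr fun i => (hadjnorm i).symm
    obtain ⟨hsum, hle⟩ := inner_tsum_cs b hadjsum
      (hs_summable_mul_left b X (hFRP.hs_summable b))
    have hns : hsNorm b (ContinuousLinearMap.adjoint T) = hsNorm b T' := by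
      unfold hsNorm
      congr 1
      exact tsum_congr hadjnorm
    rw [he]
    refine hle.trans ?_
    rw [hns]
    exact mul_le_mul_of_nonneg_left (hsNorm_mul_left_le b X (hFRP.hs_summable b))
      (hsNorm_nonneg b T')
  rw [hcyc, hsub]
  calc ‖trOp b (X * T * P) + trOp b (X * P * T)‖
      ≤ ‖trOp b (X * T * P)‖ + ‖trOp b (X * P * T)‖ := norm_add_le _ _
    _ ≤ hsNorm b P * (‖X‖ * hsNorm b T) + hsNorm b T' * (‖X‖ * hsNorm b P) :=
        add_le_add hb1 hb2
    _ = ‖X‖ * (hsNorm b T + hsNorm b T') * hsNorm b P := by ring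

/-! ### Topological helpers -/

lemma cluster_eq_of_tendsto {α X' : Type*} [TopologicalSpace X'] [T2Space X']
    {F : Filter α} {u : α → X'} {y a : X'} (h : MapClusterPt y F u)
    (ht : Tendsto u F (𝓝 a)) : y = a := by
  have h1 : (𝓝 y ⊓ Filter.map u F).NeBot := h.clusterPt
  have h2 : 𝓝 y ⊓ Filter.map u F ≤ 𝓝 y ⊓ 𝓝 a := inf_le_inf_left _ ht
  exact eq_of_nhds_neBot (h1.mono h2)

lemma cluster_mem_closed {α X' : Type*} [TopologicalSpace X'] {F : Filter α} [F.NeBot]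
    {u : α → X'} {y : X'} {s : Set X'} (h : MapClusterPt y F u) (hs : IsClosed s)
    (hmem : ∀ n, u n ∈ s) : y ∈ s := by
  have h1 : Filter.map u F ≤ Filter.principal s :=
    Filter.le_principal_iff.mpr (Filter.mem_map.mpr (Filter.univ_mem' hmem))
  have h2 : ClusterPt y (Filter.principal s) := h.clusterPt.mono h1
  rw [← hs.closure_eq]
  exact mem_closure_iff_clusterPt.mpr h2

lemma isClosed_nonneg_complex : IsClosed {z : ℂ | 0 ≤ z} := by
  have h : {z : ℂ | 0 ≤ z} = Complex.re ⁻¹' Set.Ici 0 ∩ Complex.im ⁻¹' {0} := by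
    ext z
    simp only [Set.mem_setOf_eq, Complex.le_def, Complex.zero_re, Complex.zero_im,
      Set.mem_inter_iff, Set.mem_preimage, Set.mem_Ici, Set.mem_singleton_iff]
    exact and_congr Iff.rfl eq_comm
  rw [h]
  exact (isClosed_Ici.preimage Complex.continuous_re).inter
    (isClosed_singleton.preimage Complex.continuous_im)

lemma trOp_star_mul_proj (b : HilbertBasis ι ℂ H) {P : H →L[ℂ] H} (hp2 : P * P = P)
    (hadj : ContinuousLinearMap.adjoint P = P) (hFRP : HasFR P) (X : H →L[ℂ] H) :
    trOp b ((star X * X) * P) = ((∑' i, ‖X (P (b i))‖ ^ 2 : ℝ) : ℂ) := by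
  rw [trOp_mul_proj b hp2 hadj hFRP (star X * X)]
  have h1 : ∀ i, ⟪P (b i), ((star X * X) * P) (b i)⟫ = ((‖X (P (b i))‖ ^ 2 : ℝ) : ℂ) := by
    intro i
    rw [mul_apply_eq_comp, mul_apply_eq_comp, star_eq_adjoint, ContinuousLinearMap.adjoint_inner_right,
      inner_self_eq_norm_sq_to_K]
    norm_cast
  rw [tsum_congr h1, ← Complex.ofReal_tsum]

lemma trOp_mul_proj_bound (b : HilbertBasis ι ℂ H) {P : H →L[ℂ] H} (hp2 : P * P = P)
    (hadj : ContinuousLinearMap.adjoint P = P) (hFRP : HasFR P) (X : H →L[ℂ] H) :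
    ‖trOp b (X * P)‖ ≤ ‖X‖ * ∑' i, ‖P (b i)‖ ^ 2 := by
  rw [trOp_mul_proj b hp2 hadj hFRP X]
  obtain ⟨_, hle⟩ := inner_tsum_cs b (hFRP.hs_summable b)
    (hs_summable_mul_left b X (hFRP.hs_summable b))
  refine hle.trans ?_
  calc hsNorm b P * hsNorm b (X * P) ≤ hsNorm b P * (‖X‖ * hsNorm b P) :=
        mul_le_mul_of_nonneg_left (hsNorm_mul_left_le b X (hFRP.hs_summable b))
          (hsNorm_nonneg b P)
    _ = ‖X‖ * (hsNorm b P * hsNorm b P) := by ring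
    _ = ‖X‖ * ∑' i, ‖P (b i)‖ ^ 2 := by
        rw [show hsNorm b P = Real.sqrt (∑' i, ‖P (b i)‖ ^ 2) from rfl,
          Real.mul_self_sqrt (tsum_nonneg fun i => sq_nonneg _)]

end AmenableAux

set_option maxHeartbeats 2000000 in
/-- if a unital separable concrete C*-algebra `𝒜 ⊆ L(H)` has a Følner
sequence `{P n}`, then `𝒜` has an amenable trace; moreover any weak-* cluster point of the
states `ψₙ(X) = Tr(X Pₙ)/Tr(Pₙ)` is a hypertrace for `𝒜` whose restriction to `𝒜` is an
amenable trace. -/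
theorem amenableTrace_of_folnerSeq
    {H : Type*} [NormedAddCommGroup H] [InnerProductSpace ℂ H] [CompleteSpace H]
    {ι : Type*} [Countable ι] (b : HilbertBasis ι ℂ H)
    (𝒜 : StarSubalgebra ℂ (H →L[ℂ] H)) (hclosed : IsClosed (𝒜 : Set (H →L[ℂ] H)))
    (hsep : TopologicalSpace.IsSeparable (𝒜 : Set (H →L[ℂ] H)))
    (P : ℕ → H →L[ℂ] H) (hP : IsFolnerSeq b (𝒜 : Set (H →L[ℂ] H)) P) :
    (∃ τ : ↥𝒜 →ₗ[ℂ] ℂ, IsAmenableTrace 𝒜 τ) ∧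
    ∀ ψseq : ℕ → WeakDual ℂ (H →L[ℂ] H),
      (∀ n X, ψseq n X = trOp b (X * P n) / trOp b (P n)) →
      ∀ ψ : WeakDual ℂ (H →L[ℂ] H), MapClusterPt ψ atTop ψseq →
        IsHypertrace (ψ : (H →L[ℂ] H) →L[ℂ] ℂ).toLinearMap (𝒜 : Set (H →L[ℂ] H)) ∧
        IsAmenableTrace 𝒜 ((ψ : (H →L[ℂ] H) →L[ℂ] ℂ).toLinearMap ∘ₗ valLM 𝒜) := by
  classical
  obtain ⟨hPn, hFol⟩ := hP
  have hp2 : ∀ n, P n * P n = P n := fun n => (hPn n).1.1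
  have hsa : ∀ n, ContinuousLinearMap.adjoint (P n) = P n := fun n => by
    rw [← ContinuousLinearMap.star_eq_adjoint]; exact (hPn n).1.2.1
  have hFRP : ∀ n, AmenableAux.HasFR (P n) := fun n =>
    AmenableAux.hasFR_of_finiteDimensional (P n) (hPn n).1.2.2
  set s : ℕ → ℝ := fun n => ∑' i, ‖P n (b i)‖ ^ 2 with hsdef
  have hspos : ∀ n, 0 < s n := fun n =>
    AmenableAux.proj_sq_tsum_pos b (hPn n).2 ((hFRP n).hs_summable b)
  have htrP : ∀ n, trOp b (P n) = ((s n : ℝ) : ℂ) := fun n =>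
    AmenableAux.trOp_proj_eq b (hp2 n) (hsa n) (hFRP n)
  have htrPne : ∀ n, trOp b (P n) ≠ 0 := fun n => by
    rw [htrP n]
    exact_mod_cast (hspos n).ne'
  have hsNP : ∀ n, hsNorm b (P n) = Real.sqrt (s n) := fun n => rfl
  have hsNP_pos : ∀ n, 0 < hsNorm b (P n) := fun n => by
    rw [hsNP n]; exact Real.sqrt_pos.mpr (hspos n)
  have key : ∀ ψseq : ℕ → WeakDual ℂ (H →L[ℂ] H),
      (∀ n X, ψseq n X = trOp b (X * P n) / trOp b (P n)) →
      ∀ ψ : WeakDual ℂ (H →L[ℂ] H), MapClusterPt ψ atTop ψseq →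
        IsHypertrace (ψ : (H →L[ℂ] H) →L[ℂ] ℂ).toLinearMap (𝒜 : Set (H →L[ℂ] H)) ∧
        IsAmenableTrace 𝒜 ((ψ : (H →L[ℂ] H) →L[ℂ] ℂ).toLinearMap ∘ₗ valLM 𝒜) := by
    intro ψseq hform ψ hcl
    have hEval : ∀ Y : H →L[ℂ] H, MapClusterPt (ψ Y) atTop (fun n => ψseq n Y) := fun Y =>
      hcl.continuousAt_comp (WeakDual.eval_continuous Y).continuousAt
    have hψone : ψ (1 : H →L[ℂ] H) = 1 := by
      have h1 : (fun n => ψseq n 1) = fun _ => (1 : ℂ) := by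
        funext n
        rw [hform n 1, one_mul, div_self (htrPne n)]
      have h2 := hEval 1
      rw [h1] at h2
      exact AmenableAux.cluster_eq_of_tendsto h2 tendsto_const_nhds
    have hψpos : ∀ X : H →L[ℂ] H, 0 ≤ ψ (star X * X) := by
      intro X
      have hmem : ∀ n, ψseq n (star X * X) ∈ {z : ℂ | 0 ≤ z} := by
        intro n
        rw [Set.mem_setOf_eq, hform n _,
          AmenableAux.trOp_star_mul_proj b (hp2 n) (hsa n) (hFRP n) X, htrP n,
          ← Complex.ofReal_div]
        exact Complex.zero_le_real.mpr
          (div_nonneg (tsum_nonneg fun i => sq_nonneg _) (hspos n).le)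
      have hcc := AmenableAux.cluster_mem_closed (hEval (star X * X))
        AmenableAux.isClosed_nonneg_complex hmem
      exact hcc
    have hψtr : ∀ X : H →L[ℂ] H, ∀ A ∈ (𝒜 : Set (H →L[ℂ] H)), ψ (X * A) = ψ (A * X) := by
      intro X A hA
      have hcl2 : MapClusterPt (ψ (X * A) - ψ (A * X)) atTop
          (fun n => ψseq n (X * A) - ψseq n (A * X)) := by
        have hc : Continuous fun χ : WeakDual ℂ (H →L[ℂ] H) => χ (X * A) - χ (A * X) :=
          (WeakDual.eval_continuous _).sub (WeakDual.eval_continuous _)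
        exact hcl.continuousAt_comp hc.continuousAt
      have hbound : ∀ n, ‖ψseq n (X * A) - ψseq n (A * X)‖ ≤
          ‖X‖ * (hsNorm b (A * P n - P n * A) / hsNorm b (P n) +
            hsNorm b (star A * P n - P n * star A) / hsNorm b (P n)) := by
        intro n
        rw [hform n _, hform n _, div_sub_div_same, norm_div, htrP n, Complex.norm_real,
          Real.norm_of_nonneg (hspos n).le]
        have hest := AmenableAux.main_est b (hp2 n) (hsa n) (hFRP n) (A := A) X
        rw [ContinuousLinearMap.star_eq_adjoint]
        rw [div_le_iff₀ (hspos n)]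
        refine hest.trans (le_of_eq ?_)
        rw [hsNP n]
        have hsq : Real.sqrt (s n) ≠ 0 := (Real.sqrt_pos.mpr (hspos n)).ne'
        rw [show s n = Real.sqrt (s n) * Real.sqrt (s n) from
          (Real.mul_self_sqrt (hspos n).le).symm]
        field_simp
        rw [Real.sqrt_sq (Real.sqrt_nonneg _)]
      have hf1 := hFol A hA
      have hf2 := hFol (star A) (star_mem hA)
      have hg : Tendsto (fun n => ‖X‖ * (hsNorm b (A * P n - P n * A) / hsNorm b (P n) +
          hsNorm b (star A * P n - P n * star A) / hsNorm b (P n))) atTop (𝓝 0) := by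
        have h3 := (hf1.add hf2).const_mul ‖X‖
        simpa using h3
      have htend : Tendsto (fun n => ψseq n (X * A) - ψseq n (A * X)) atTop (𝓝 0) := by
        refine tendsto_zero_iff_norm_tendsto_zero.mpr ?_
        exact squeeze_zero (fun n => norm_nonneg _) hbound hg
      exact sub_eq_zero.mp (AmenableAux.cluster_eq_of_tendsto hcl2 htend)
    have hstate : IsStateOn (ψ : (H →L[ℂ] H) →L[ℂ] ℂ).toLinearMap := ⟨hψone, hψpos⟩
    have hhyper : IsHypertrace (ψ : (H →L[ℂ] H) →L[ℂ] ℂ).toLinearMap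
        (𝒜 : Set (H →L[ℂ] H)) := ⟨hstate, hψtr⟩
    refine ⟨hhyper, ?_, (ψ : (H →L[ℂ] H) →L[ℂ] ℂ).toLinearMap, hhyper, fun a => rfl⟩
    constructor
    · show ψ ((1 : ↥𝒜) : H →L[ℂ] H) = 1
      have h1 : ((1 : ↥𝒜) : H →L[ℂ] H) = 1 := rfl
      rw [h1]; exact hψone
    · intro a
      show (0 : ℂ) ≤ ψ ((star a * a : ↥𝒜) : H →L[ℂ] H)
      have h1 : ((star a * a : ↥𝒜) : H →L[ℂ] H) =
          star (a : H →L[ℂ] H) * (a : H →L[ℂ] H) := rfl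
      rw [h1]; exact hψpos _
  refine ⟨?_, key⟩
  have hsummul : ∀ n (X : H →L[ℂ] H),
      Summable fun i => (inner ℂ (b i) ((X * P n) (b i)) : ℂ) :=
    fun n X => ((hFRP n).mul_left X).summable_inner b
  let L : ℕ → (H →L[ℂ] H) →ₗ[ℂ] ℂ := fun n =>
    { toFun := fun X => trOp b (X * P n) / trOp b (P n)
      map_add' := by
        intro X Y
        have h1 : trOp b ((X + Y) * P n) = trOp b (X * P n) + trOp b (Y * P n) := by
          unfold trOp
          rw [← Summable.tsum_add (hsummul n X) (hsummul n Y)]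
          refine tsum_congr fun i => ?_
          rw [add_mul, ContinuousLinearMap.add_apply, inner_add_right]
        simp only [h1, add_div]
      map_smul' := by
        intro c X
        have h1 : trOp b ((c • X) * P n) = c * trOp b (X * P n) := by
          unfold trOp
          rw [← tsum_mul_left]
          refine tsum_congr fun i => ?_
          rw [smul_mul_assoc, ContinuousLinearMap.smul_apply, inner_smul_right]
        simp only [h1, RingHom.id_apply, smul_eq_mul, mul_div_assoc] }
  have hLb : ∀ n (X : H →L[ℂ] H), ‖L n X‖ ≤ 1 * ‖X‖ := by
    intro n X
    show ‖trOp b (X * P n) / trOp b (P n)‖ ≤ 1 * ‖X‖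
    rw [norm_div, htrP n, Complex.norm_real, Real.norm_of_nonneg (hspos n).le, one_mul,
      div_le_iff₀ (hspos n)]
    exact AmenableAux.trOp_mul_proj_bound b (hp2 n) (hsa n) (hFRP n) X
  let φ : ℕ → WeakDual ℂ (H →L[ℂ] H) := fun n =>
    StrongDual.toWeakDual (LinearMap.mkContinuous (L n) 1 (hLb n))
  have hφform : ∀ n X, φ n X = trOp b (X * P n) / trOp b (P n) := fun n X => rfl
  have hmem : ∀ n, φ n ∈ WeakDual.toStrongDual ⁻¹' Metric.closedBall 0 1 := by
    intro n
    simp only [Set.mem_preimage, mem_closedBall_zero_iff]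
    exact LinearMap.mkContinuous_norm_le (L n) zero_le_one (hLb n)
  have hle : Filter.map φ atTop ≤
      Filter.principal (WeakDual.toStrongDual ⁻¹' Metric.closedBall 0 1) :=
    Filter.le_principal_iff.mpr (Filter.mem_map.mpr (Filter.univ_mem' hmem))
  obtain ⟨ψ, -, hψ⟩ :=
    (WeakDual.isCompact_closedBall (𝕜 := ℂ) (E := H →L[ℂ] H) 0 1).exists_clusterPt hle
  exact ⟨_, (key φ hφform ψ hψ).2⟩
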